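/- For the (3,-2) reduction of the plus-KdV equation, v₅ determined by v₂ + v₃ = 1/v₀ + 1/v₅, the function J₁ = 1/v₀ - 1/v₁ + 1/v₂ - 1/v₃ + 1/v₄ - v₂ is a 2-integral: J₁(v₁,...,v₅) = -J₁(v₀,...,v₄). -/
import Mathlib

/-- J₁ is a 2-integral (anti-integral) of the (3,-2) plus-KdV reduction. -/
theorem plus_kdv_J1_anti_integral (v0 v1 v2 v3 v4 : ℝ)
    (h0 : v0 ≠ 0) (h1 : v1 ≠ 0) (h2 : v2 ≠ 0) (h3 : v3 ≠ 0) (h4 : v4 ≠ 0)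
    (hden : v0 * v2 + v0 * v3 - 1 ≠ 0)
    (v5 : ℝ) (hv5 : v5 = v0 / (v0 * v2 + v0 * v3 - 1)) :
    1/v1 - 1/v2 + 1/v3 - 1/v4 + 1/v5 - v3
      = -(1/v0 - 1/v1 + 1/v2 - 1/v3 + 1/v4 - v2) := by
  subst hv5
  rw [one_div_div]
  field_simp
  ring
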